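/- arXiv:1806.10849 — 3 statements merged into one kernel-verified Lean document; each statement's English description precedes it below -/
import Mathlib

section
/- Let f(z) = Σ_{j≥1} c_j z_j be a linear function with complex coefficients satisfying Σ_{j≥1} |c_j|² < ∞. Then the supremum of |⟨g, f⟩_{L²(𝕋^∞)}| / ‖g‖_{L^∞(𝕋^∞)} over all nonzero analytic polynomials g equals sup_{j≥1} |c_j|. -/
open MeasureTheory Complex Filter
open scoped ENNReal NNReal

noncomputable instance : MeasurableSpace Circle := borel Circle
instance : BorelSpace Circle := ⟨rfl⟩

/-- The countably infinite polytorus `𝕋^∞`. -/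
abbrev Polytorus : Type := ℕ → Circle

/-- The Haar probability measure on a nonempty compact group. -/
noncomputable def haarP (G : Type*) [Group G] [TopologicalSpace G] [IsTopologicalGroup G]
    [CompactSpace G] [Nonempty G] [MeasurableSpace G] [BorelSpace G] : Measure G :=
  Measure.haarMeasure ⊤

/-- The Haar probability measure `μ_∞` on `𝕋^∞`, i.e. the countable product of normalized
Lebesgue arc measures. -/
noncomputable def muInf : Measure Polytorus := haarP Polytorus

instance : IsProbabilityMeasure muInf :=
  ⟨by simpa [muInf, haarP] using
    Measure.haarMeasure_self (K₀ := (⊤ : TopologicalSpace.PositiveCompacts Polytorus))⟩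

/-- The analytic monomial `z ^ α` for a finitely supported multi-index `α`. -/
def monomial (α : ℕ →₀ ℕ) : Polytorus → ℂ := fun z => α.prod fun j n => (z j : ℂ) ^ n

/-- Analytic polynomials on `𝕋^∞`: finite linear combinations of analytic monomials. -/
def IsAnalyticPoly (f : Polytorus → ℂ) : Prop :=
  f ∈ Submodule.span ℂ (Set.range monomial)

/-- The `L²(𝕋^∞)` pairing `⟨f, g⟩ = ∫ f conj(g) dμ_∞`. -/
noncomputable def pairing (f g : Polytorus → ℂ) : ℂ :=
  ∫ z, f z * (starRingEnd ℂ) (g z) ∂muInf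

/-- The dual norm `‖φ‖_{(H^∞)^*}`: the supremum of `|⟨g, φ⟩|/‖g‖_{L^∞}` over all nonzero
analytic polynomials `g`. -/
noncomputable def dualNormInf (φ : Polytorus → ℂ) : ℝ :=
  sSup {t : ℝ | ∃ g : Polytorus → ℂ, IsAnalyticPoly g ∧ g ≠ 0 ∧
    t = ‖pairing g φ‖ / (eLpNorm g ⊤ muInf).toReal}

/-- The `j`-th coordinate function `z ↦ z_j` on `𝕋^∞`. -/
def coordFn (j : ℕ) : Polytorus → ℂ := fun z => (z j : ℂ)

lemma continuous_coordFn (j : ℕ) : Continuous (coordFn j) :=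
  continuous_subtype_val.comp (continuous_apply j)

lemma memℒp_coordFn (j : ℕ) : MemLp (coordFn j) 2 muInf :=
  MemLp.of_bound (continuous_coordFn j).aestronglyMeasurable 1
    (Filter.Eventually.of_forall fun z => by simp [coordFn, Circle.norm_coe])

/-- The linear function `f(z) = Σ_j c_j z_j`, as an element of `L²(𝕋^∞)` (the series
converges in `L²` whenever the coefficients are square-summable). -/
noncomputable def linearFn (c : ℕ → ℂ) : Lp ℂ 2 muInf :=
  ∑' j, c j • ((memℒp_coordFn j).toLp (coordFn j))


/-! ### Auxiliary lemmas -/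

instance : Measure.IsMulLeftInvariant muInf := by unfold muInf haarP; infer_instance
instance : Measure.IsOpenPosMeasure muInf := by unfold muInf haarP; infer_instance

lemma char_int_zero (f : Polytorus → ℂ) (a : Polytorus) (ω : ℂ) (hω : ω ≠ 1)
    (hf : ∀ z, f (a * z) = ω * f z) : ∫ z, f z ∂muInf = 0 := by
  have h1 : ∫ z, f (a * z) ∂muInf = ∫ z, f z ∂muInf := integral_mul_left_eq_self f a
  have h2 : ∫ z, f (a * z) ∂muInf = ω * ∫ z, f z ∂muInf := by
    simp_rw [hf]; exact integral_const_mul ω f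
  have h3 : (ω - 1) * ∫ z, f z ∂muInf = 0 := by rw [sub_mul, h2.symm.trans h1]; ring
  rcases mul_eq_zero.1 h3 with h | h
  · exact absurd (sub_eq_zero.1 h) hω
  · exact h

lemma monomial_mul (α : ℕ →₀ ℕ) (a z : Polytorus) :
    monomial α (a * z) = monomial α a * monomial α z := by
  unfold monomial
  rw [← Finsupp.prod_mul]
  refine Finsupp.prod_congr fun j _ => ?_
  have : ((a * z) j : ℂ) = (a j : ℂ) * (z j : ℂ) := rfl
  rw [this, mul_pow]

lemma monomial_update_one (α : ℕ →₀ ℕ) (k : ℕ) (w : Circle) :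
    monomial α (Function.update (1 : Polytorus) k w) = (w : ℂ) ^ (α k) := by
  unfold monomial
  rw [Finsupp.prod]
  rw [Finset.prod_eq_single k (fun b _ hb => by simp [Function.update_of_ne hb])
    (fun hk => by simp [Finsupp.notMem_support_iff.1 hk])]
  simp [Function.update_self]

lemma intCoord (α : ℕ →₀ ℕ) (j : ℕ) :
    ∫ z, monomial α z * (starRingEnd ℂ) (coordFn j z) ∂muInf
      = if α = Finsupp.single j 1 then 1 else 0 := by
  by_cases hα : α = Finsupp.single j 1
  · subst hα
    rw [if_pos rfl]
    have : ∀ z : Polytorus, monomial (Finsupp.single j 1) z * (starRingEnd ℂ) (coordFn j z) = 1 := by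
      intro z
      unfold monomial coordFn
      rw [Finsupp.prod_single_index (by simp)]
      simp [Complex.mul_conj]
    simp_rw [this]
    simp
  · rw [if_neg hα]
    obtain ⟨k, hk⟩ : ∃ k, α k ≠ (Finsupp.single j 1) k := by
      by_contra h
      push_neg at h
      exact hα (Finsupp.ext h)
    set s : ℕ := (Finsupp.single j 1) k with hs
    set m : ℤ := (α k : ℤ) - (s : ℤ) with hm
    have hm0 : m ≠ 0 := by
      simp only [hm, sub_ne_zero]
      exact_mod_cast hk
    have hmC : (m : ℂ) ≠ 0 := Int.cast_ne_zero.2 hm0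
    set w : Circle := Circle.exp (Real.pi / (m : ℝ)) with hw
    have hwm : (w : ℂ) ^ m = -1 := by
      rw [hw, Circle.coe_exp, ← Complex.exp_int_mul]
      have : (m : ℂ) * ((Real.pi / (m : ℝ) : ℝ) * Complex.I) = Real.pi * Complex.I := by
        push_cast
        field_simp
      rw [this, Complex.exp_pi_mul_I]
    have hω : ((w : ℂ) ^ m : ℂ) ≠ 1 := by rw [hwm]; intro h; norm_num at h
    refine char_int_zero _ (Function.update (1 : Polytorus) k w) _ hω fun z => ?_
    have hconj : (starRingEnd ℂ) (coordFn j (Function.update (1 : Polytorus) k w * z))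
        = (starRingEnd ℂ) (w : ℂ) ^ s * (starRingEnd ℂ) (coordFn j z) := by
      unfold coordFn
      have : ((Function.update (1 : Polytorus) k w * z) j : ℂ)
          = ((Function.update (1 : Polytorus) k w) j : ℂ) * (z j : ℂ) := rfl
      rw [this, map_mul]
      by_cases hjk : j = k
      · subst hjk
        simp [hs, Function.update_self, Finsupp.single_apply]
      · rw [Function.update_of_ne hjk]
        have : s = 0 := by
          rw [hs, Finsupp.single_apply, if_neg hjk]
        simp [this]
    rw [monomial_mul, monomial_update_one, hconj]
    have hconjw : (starRingEnd ℂ) (w : ℂ) = ((w : ℂ))⁻¹ := (Circle.coe_inv_eq_conj w).symm ▸ by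
      simp [Circle.coe_inv]
    have : (w : ℂ) ^ (α k) * ((starRingEnd ℂ) (w : ℂ)) ^ s = (w : ℂ) ^ m := by
      rw [hconjw, hm, ← zpow_natCast (w : ℂ) (α k), ← zpow_natCast ((w : ℂ))⁻¹ s,
        inv_zpow, ← zpow_neg, ← zpow_add₀ (Circle.coe_ne_zero w), sub_eq_add_neg]
    ring_nf
    rw [← this]
    ring

lemma continuous_monomial (α : ℕ →₀ ℕ) : Continuous (monomial α) := by
  unfold monomial
  simp_rw [Finsupp.prod]
  exact continuous_finset_prod _ fun j _ => (continuous_coordFn j).pow (α j)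

lemma isAnalyticPoly_continuous {g : Polytorus → ℂ} (hg : IsAnalyticPoly g) : Continuous g := by
  refine Submodule.span_induction ?_ ?_ ?_ ?_ hg
  · rintro x ⟨α, rfl⟩
    exact continuous_monomial α
  · exact continuous_const
  · exact fun x y _ _ hx hy => hx.add hy
  · exact fun a x _ hx => by
      have : Continuous fun z => a • x z := hx.const_smul a
      exact this

lemma exists_bound {g : Polytorus → ℂ} (hg : Continuous g) : ∃ C, ∀ x, ‖g x‖ ≤ C := by
  obtain ⟨x, -, hx⟩ := isCompact_univ.exists_isMaxOn Set.univ_nonempty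
    (hg.norm.continuousOn (s := Set.univ))
  exact ⟨‖g x‖, fun y => hx (Set.mem_univ y)⟩

lemma memℒp_of_continuous {g : Polytorus → ℂ} (hg : Continuous g) (p : ℝ≥0∞) :
    MemLp g p muInf := by
  obtain ⟨C, hC⟩ := exists_bound hg
  exact MemLp.of_bound hg.aestronglyMeasurable C (Eventually.of_forall hC)

lemma integrable_of_continuous {g : Polytorus → ℂ} (hg : Continuous g) :
    Integrable g muInf :=
  memLp_one_iff_integrable.1 (memℒp_of_continuous hg 1)

/-- pointwise norm bound by the essential sup norm -/
lemma norm_le_eLpNormTop {g : Polytorus → ℂ} (hg : Continuous g) (x : Polytorus) :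
    ‖g x‖ ≤ (eLpNorm g ⊤ muInf).toReal := by
  obtain ⟨C, hC⟩ := exists_bound hg
  have hfin : eLpNorm g ⊤ muInf ≠ ⊤ := (memℒp_of_continuous hg ⊤).2.ne
  have hle : (‖g x‖₊ : ℝ≥0∞) ≤ eLpNorm g ⊤ muInf := by
    rw [eLpNorm_exponent_top]
    by_contra hlt
    push_neg at hlt
    set t := eLpNormEssSup g muInf with ht
    have hopen : IsOpen {y : Polytorus | t < (‖g y‖₊ : ℝ≥0∞)} :=
      isOpen_lt continuous_const (ENNReal.continuous_coe.comp (continuous_nnnorm.comp hg))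
    have hnull : muInf {y : Polytorus | t < (‖g y‖₊ : ℝ≥0∞)} = 0 := by
      have := enorm_ae_le_eLpNormEssSup g muInf
      rw [ae_iff] at this
      refine measure_mono_null (fun y hy => ?_) this
      exact not_le.2 hy
    exact hopen.measure_ne_zero muInf ⟨x, hlt⟩ hnull
  calc ‖g x‖ = ((‖g x‖₊ : ℝ≥0∞)).toReal := by simp
  _ ≤ (eLpNorm g ⊤ muInf).toReal := ENNReal.toReal_mono hfin hle

/-- The `j`-th "linear Fourier coefficient" of `g`. -/
noncomputable def coefA (g : Polytorus → ℂ) (j : ℕ) : ℂ :=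
  ∫ z, g z * (starRingEnd ℂ) (coordFn j z) ∂muInf

/-- The diagonal first-coefficient integral of `g`. -/
noncomputable def diagI (g : Polytorus → ℂ) : ℂ :=
  ∫ z, g (fun _ => z 0) * (starRingEnd ℂ) (coordFn 0 z) ∂muInf

lemma sum_eq_one_iff (α : ℕ →₀ ℕ) :
    (α.sum fun _ n => n) = 1 ↔ ∃ j, α = Finsupp.single j 1 := by
  constructor
  · intro h
    rw [Finsupp.sum] at h
    have hne : α.support.Nonempty := by
      by_contra hemp
      rw [Finset.not_nonempty_iff_eq_empty] at hemp
      rw [hemp] at h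
      simp at h
    obtain ⟨j, hj⟩ := hne
    have hαj : α j = 1 := by
      have h1 : 1 ≤ α j := Nat.one_le_iff_ne_zero.2 (Finsupp.mem_support_iff.1 hj)
      have h2 : α j ≤ 1 := h ▸ Finset.single_le_sum (fun i _ => Nat.zero_le _) hj
      omega
    refine ⟨j, Finsupp.ext fun i => ?_⟩
    rcases eq_or_ne i j with rfl | hij
    · simp [hαj]
    · rw [Finsupp.single_apply, if_neg (Ne.symm hij)]
      by_cases hi : i ∈ α.support
      · exfalso
        rw [Finset.sum_eq_add_sum_sdiff_singleton_of_mem hj] at h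
        have : α i = 0 := by
          have hz : ∑ k ∈ α.support \ {j}, α k = 0 := by omega
          exact (Finset.sum_eq_zero_iff.1 hz) i (by
            simp [Finset.mem_sdiff, hi, hij])
        exact Finsupp.mem_support_iff.1 hi this
      · exact Finsupp.notMem_support_iff.1 hi
  · rintro ⟨j, rfl⟩
    simp [Finsupp.sum_single_index]

lemma coefA_monomial (α : ℕ →₀ ℕ) (j : ℕ) :
    coefA (monomial α) j = if α = Finsupp.single j 1 then 1 else 0 :=
  intCoord α j

lemma monomial_const (α : ℕ →₀ ℕ) (w : Circle) :
    monomial α (fun _ => w) = (w : ℂ) ^ (α.sum fun _ n => n) := by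
  unfold monomial
  rw [Finsupp.prod, Finsupp.sum, Finset.prod_pow_eq_pow_sum]

lemma monomial_single (j n : ℕ) (z : Polytorus) :
    monomial (Finsupp.single j n) z = (z j : ℂ) ^ n := by
  unfold monomial
  rw [Finsupp.prod_single_index (by simp)]

lemma diagI_monomial (α : ℕ →₀ ℕ) :
    diagI (monomial α) = if (α.sum fun _ n => n) = 1 then 1 else 0 := by
  unfold diagI
  have : ∀ z : Polytorus, monomial α (fun _ => z 0) = monomial (Finsupp.single 0 (α.sum fun _ n => n)) z := by
    intro z
    rw [monomial_const, monomial_single]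
  simp_rw [this]
  rw [intCoord]
  congr 1
  simp [Finsupp.single_injective 0 |>.eq_iff]

lemma tsum_coefA_monomial (α : ℕ →₀ ℕ) :
    Summable (coefA (monomial α)) ∧ ∑' j, coefA (monomial α) j = diagI (monomial α) := by
  by_cases h : (α.sum fun _ n => n) = 1
  · obtain ⟨j₀, rfl⟩ := (sum_eq_one_iff α).1 h
    have hA : coefA (monomial (Finsupp.single j₀ 1)) = fun j => if j = j₀ then (1:ℂ) else 0 := by
      funext j
      rw [coefA_monomial]
      by_cases hj : j = j₀
      · subst hj; simp
      · rw [if_neg, if_neg hj]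
        intro h'
        exact hj ((Finsupp.single_left_inj one_ne_zero).1 h'.symm)
    rw [hA, diagI_monomial, if_pos h]
    constructor
    · exact summable_of_ne_finset_zero (s := {j₀}) (fun j hj => by
        simp at hj; simp [hj])
    · exact tsum_ite_eq j₀ (fun _ => (1:ℂ))
  · have hA : coefA (monomial α) = fun _ => (0:ℂ) := by
      funext j
      rw [coefA_monomial, if_neg]
      rintro rfl
      exact h ((sum_eq_one_iff _).2 ⟨j, rfl⟩)
    rw [hA, diagI_monomial, if_neg h]
    exact ⟨summable_zero, tsum_zero⟩

lemma key_span {g : Polytorus → ℂ} (hg : IsAnalyticPoly g) :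
    Summable (coefA g) ∧ ∑' j, coefA g j = diagI g := by
  refine Submodule.span_induction ?_ ?_ ?_ ?_ hg
  · rintro x ⟨α, rfl⟩
    exact tsum_coefA_monomial α
  · have hA : coefA (0 : Polytorus → ℂ) = fun _ => (0:ℂ) := by
      funext j; simp [coefA]
    rw [hA]
    refine ⟨summable_zero, ?_⟩
    simp [diagI]
  · rintro x y hx hy ⟨hxs, hxt⟩ ⟨hys, hyt⟩
    have hcx := isAnalyticPoly_continuous hx
    have hcy := isAnalyticPoly_continuous hy
    have hAadd : ∀ j, coefA (x + y) j = coefA x j + coefA y j := by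
      intro j
      unfold coefA
      simp_rw [Pi.add_apply, add_mul]
      exact integral_add
        (integrable_of_continuous (hcx.mul ((Complex.continuous_conj).comp (continuous_coordFn j))))
        (integrable_of_continuous (hcy.mul ((Complex.continuous_conj).comp (continuous_coordFn j))))
    have hDadd : diagI (x + y) = diagI x + diagI y := by
      unfold diagI
      simp_rw [Pi.add_apply, add_mul]
      have hdiag : Continuous (fun z => (fun _ => z 0) : Polytorus → Polytorus) :=
        continuous_pi fun _ => continuous_apply 0
      exact integral_add
        (integrable_of_continuous ((hcx.comp hdiag).mul
          ((Complex.continuous_conj).comp (continuous_coordFn 0))))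
        (integrable_of_continuous ((hcy.comp hdiag).mul
          ((Complex.continuous_conj).comp (continuous_coordFn 0))))
    constructor
    · exact (funext hAadd : coefA (x+y) = _) ▸ hxs.add hys
    · rw [funext hAadd, hDadd, ← hxt, ← hyt]
      exact Summable.tsum_add hxs hys
  · rintro a x hx ⟨hxs, hxt⟩
    have hAsmul : ∀ j, coefA (a • x) j = a * coefA x j := by
      intro j
      unfold coefA
      simp_rw [Pi.smul_apply, smul_eq_mul, mul_assoc]
      exact integral_const_mul a _
    have hDsmul : diagI (a • x) = a * diagI x := by
      unfold diagI
      simp_rw [Pi.smul_apply, smul_eq_mul, mul_assoc]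
      exact integral_const_mul a _
    constructor
    · exact (funext hAsmul : coefA (a • x) = _) ▸ hxs.mul_left a
    · rw [funext hAsmul, hDsmul, ← hxt]
      exact tsum_mul_left

lemma isAnalyticPoly_translate {g : Polytorus → ℂ} (hg : IsAnalyticPoly g) (ζ : Polytorus) :
    IsAnalyticPoly (fun z => g (ζ * z)) := by
  refine Submodule.span_induction ?_ ?_ ?_ ?_ hg
  · rintro x ⟨α, rfl⟩
    have : (fun z => monomial α (ζ * z)) = monomial α ζ • monomial α := by
      funext z
      rw [monomial_mul]
      rfl
    rw [IsAnalyticPoly, this]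
    exact Submodule.smul_mem _ _ (Submodule.subset_span ⟨α, rfl⟩)
  · exact Submodule.zero_mem _
  · intro x y _ _ hx hy
    exact Submodule.add_mem _ hx hy
  · intro a x _ hx
    exact Submodule.smul_mem _ _ hx

lemma coefA_translate {g : Polytorus → ℂ} (ζ : Polytorus) (j : ℕ) :
    coefA (fun z => g (ζ * z)) j = (ζ j : ℂ) * coefA g j := by
  unfold coefA
  have h1 : ∫ z, g (ζ * (ζ⁻¹ * z)) * (starRingEnd ℂ) (coordFn j (ζ⁻¹ * z)) ∂muInf
      = ∫ z, g (ζ * z) * (starRingEnd ℂ) (coordFn j z) ∂muInf :=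
    integral_mul_left_eq_self (fun z => g (ζ * z) * (starRingEnd ℂ) (coordFn j z)) ζ⁻¹
  rw [← h1]
  have h2 : ∀ z : Polytorus, g (ζ * (ζ⁻¹ * z)) * (starRingEnd ℂ) (coordFn j (ζ⁻¹ * z))
      = (ζ j : ℂ) * (g z * (starRingEnd ℂ) (coordFn j z)) := by
    intro z
    rw [mul_inv_cancel_left]
    have hc : coordFn j (ζ⁻¹ * z) = ((ζ j : ℂ))⁻¹ * coordFn j z := by
      unfold coordFn
      have : ((ζ⁻¹ * z) j : ℂ) = ((ζ j)⁻¹ : Circle) * (z j : ℂ) := rfl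
      rw [this, Circle.coe_inv]
    rw [hc, map_mul, map_inv₀]
    have : (starRingEnd ℂ) ((ζ j : ℂ)) = ((ζ j : ℂ))⁻¹ := by
      rw [← Circle.coe_inv_eq_conj, Circle.coe_inv]
    rw [this, inv_inv]
    ring
  simp_rw [h2]
  exact integral_const_mul _ _

/-- The conjugate sign of a complex number, as a circle element. -/
noncomputable def csgn (a : ℂ) : Circle :=
  if h : a = 0 then 1 else ⟨(starRingEnd ℂ) a / (‖a‖ : ℂ), by
    rw [Submonoid.unitSphere, Submonoid.mem_mk, Subsemigroup.mem_mk,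
      Metric.mem_sphere, dist_zero_right, norm_div]
    simp [Complex.norm_conj, h]⟩

lemma csgn_mul_self (a : ℂ) : (csgn a : ℂ) * a = (‖a‖ : ℂ) := by
  unfold csgn
  by_cases h : a = 0
  · simp [h]
  · simp only [h, ↓reduceDIte]
    have habs : (‖a‖ : ℂ) ≠ 0 := by
      simp [h]
    field_simp
    rw [mul_comm ((starRingEnd ℂ) a) a, Complex.mul_conj, Complex.normSq_eq_norm_sq]
    push_cast
    ring

lemma tsum_norm_coefA_le {g : Polytorus → ℂ} (hg : IsAnalyticPoly g) :
    Summable (fun j => ‖coefA g j‖) ∧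
      ∑' j, ‖coefA g j‖ ≤ (eLpNorm g ⊤ muInf).toReal := by
  have hcont := isAnalyticPoly_continuous hg
  set ζ : Polytorus := fun j => csgn (coefA g j) with hζ
  set G : Polytorus → ℂ := fun z => g (ζ * z) with hGdef
  have hG : IsAnalyticPoly G := isAnalyticPoly_translate hg ζ
  obtain ⟨hGs, hGt⟩ := key_span hG
  have hAG : coefA G = fun j => ((‖coefA g j‖ : ℝ) : ℂ) := by
    funext j
    rw [hGdef, coefA_translate, hζ, csgn_mul_self]
  have hsummable : Summable fun j => ‖coefA g j‖ := by
    rw [hAG] at hGs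
    exact Complex.summable_ofReal.1 hGs
  refine ⟨hsummable, ?_⟩
  have htsum : ((∑' j, ‖coefA g j‖ : ℝ) : ℂ) = diagI G := by
    rw [Complex.ofReal_tsum, ← hGt, hAG]
  have h1 : ∑' j, ‖coefA g j‖ = ‖diagI G‖ := by
    rw [← htsum, Complex.norm_real]
    exact (_root_.abs_of_nonneg (tsum_nonneg fun j => norm_nonneg _)).symm
  rw [h1]
  unfold diagI
  have hbound : ∀ z : Polytorus,
      ‖G (fun _ => z 0) * (starRingEnd ℂ) (coordFn 0 z)‖ ≤ (eLpNorm g ⊤ muInf).toReal := by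
    intro z
    rw [norm_mul]
    have h2 : ‖(starRingEnd ℂ) (coordFn 0 z)‖ = 1 := by
      rw [RCLike.norm_conj]
      simp [coordFn, Circle.norm_coe]
    rw [h2, mul_one, hGdef]
    exact norm_le_eLpNormTop hcont _
  calc ‖∫ z, G (fun _ => z 0) * (starRingEnd ℂ) (coordFn 0 z) ∂muInf‖
      ≤ (eLpNorm g ⊤ muInf).toReal * (muInf Set.univ).toReal :=
        norm_integral_le_of_norm_le_const (Eventually.of_forall hbound)
    _ = (eLpNorm g ⊤ muInf).toReal := by simp

lemma orthonormal_coord :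
    Orthonormal ℂ (fun j => (memℒp_coordFn j).toLp (coordFn j)) := by
  rw [orthonormal_iff_ite]
  intro i j
  have h1 : (inner ℂ ((memℒp_coordFn i).toLp (coordFn i)) ((memℒp_coordFn j).toLp (coordFn j)) : ℂ)
      = ∫ z, monomial (Finsupp.single j 1) z * (starRingEnd ℂ) (coordFn i z) ∂muInf := by
    rw [MeasureTheory.L2.inner_def]
    apply integral_congr_ae
    filter_upwards [(memℒp_coordFn i).coeFn_toLp, (memℒp_coordFn j).coeFn_toLp] with z hi hj
    rw [hi, hj, RCLike.inner_apply', monomial_single, pow_one]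
    exact mul_comm _ _
  rw [h1, intCoord]
  by_cases hij : i = j
  · subst hij; simp
  · rw [if_neg, if_neg hij]
    intro h'
    exact hij (((Finsupp.single_left_inj one_ne_zero).1 h').symm)

lemma summable_coord_smul (c : ℕ → ℂ) (hc : Summable fun j => ‖c j‖ ^ 2) :
    Summable fun j => c j • ((memℒp_coordFn j).toLp (coordFn j)) := by
  have h := (orthonormal_coord.orthogonalFamily).summable_iff_norm_sq_summable c
  have h2 : (fun i => (LinearIsometry.toSpanSingleton ℂ _ (orthonormal_coord.1 i)) (c i))
      = fun i => c i • ((memℒp_coordFn i).toLp (coordFn i)) := by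
    funext i
    rw [LinearIsometry.toSpanSingleton_apply]
  rw [h2] at h
  exact h.2 (by simpa using hc)

lemma inner_linearFn (c : ℕ → ℂ) (hc : Summable fun j => ‖c j‖ ^ 2) (v : Lp ℂ 2 muInf) :
    (inner ℂ (linearFn c) v : ℂ)
      = ∑' j, (starRingEnd ℂ) (c j) * (inner ℂ ((memℒp_coordFn j).toLp (coordFn j)) v : ℂ) := by
  have hsum := summable_coord_smul c hc
  have h1 : (inner ℂ v (linearFn c) : ℂ)
      = ∑' j, c j * (inner ℂ v ((memℒp_coordFn j).toLp (coordFn j)) : ℂ) := by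
    have hmap := (innerSL ℂ v).map_tsum hsum
    simp only [innerSL_apply_apply, inner_smul_right] at hmap
    rw [linearFn]
    exact hmap
  have h2 : (inner ℂ (linearFn c) v : ℂ) = (starRingEnd ℂ) (inner ℂ v (linearFn c) : ℂ) :=
    (inner_conj_symm _ _).symm
  rw [h2, h1]
  have h3 : (starRingEnd ℂ) (∑' j, c j * (inner ℂ v ((memℒp_coordFn j).toLp (coordFn j)) : ℂ))
      = ∑' j, star (c j * (inner ℂ v ((memℒp_coordFn j).toLp (coordFn j)) : ℂ)) := tsum_star
  rw [h3]
  congr 1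
  funext j
  rw [star_mul']
  congr 1
  show (starRingEnd ℂ) (inner ℂ v ((memℒp_coordFn j).toLp (coordFn j)) : ℂ) = _
  exact inner_conj_symm ((memℒp_coordFn j).toLp (coordFn j)) v

lemma pairing_eq (c : ℕ → ℂ) (hc : Summable fun j => ‖c j‖ ^ 2) {g : Polytorus → ℂ}
    (hg : MemLp g 2 muInf) :
    pairing g ⇑(linearFn c) = ∑' j, (starRingEnd ℂ) (c j) * coefA g j := by
  have h0 : pairing g ⇑(linearFn c) = (inner ℂ (linearFn c) (hg.toLp g) : ℂ) := by
    rw [MeasureTheory.L2.inner_def]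
    unfold pairing
    apply integral_congr_ae
    filter_upwards [hg.coeFn_toLp] with z hz
    rw [hz, RCLike.inner_apply']
    ring
  rw [h0, inner_linearFn c hc]
  congr 1
  funext j
  congr 1
  rw [MeasureTheory.L2.inner_def]
  unfold coefA
  apply integral_congr_ae
  filter_upwards [(memℒp_coordFn j).coeFn_toLp, hg.coeFn_toLp] with z h1 h2
  rw [h1, h2, RCLike.inner_apply']
  ring

lemma eLpNorm_coordFn_top (j : ℕ) : eLpNorm (coordFn j) ⊤ muInf = 1 := by
  rw [eLpNorm_exponent_top, eLpNormEssSup]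
  have : (fun z : Polytorus => ‖coordFn j z‖ₑ) = fun _ => 1 := by
    funext z
    have : ‖coordFn j z‖₊ = 1 := by
      ext
      simp [coordFn, Circle.norm_coe]
    rw [enorm_eq_nnnorm, this, ENNReal.coe_one]
  rw [this]
  exact essSup_const 1 (NeZero.ne muInf)

lemma isAnalyticPoly_coordFn (j : ℕ) : IsAnalyticPoly (coordFn j) := by
  have : coordFn j = monomial (Finsupp.single j 1) := by
    funext z
    rw [monomial_single, pow_one]
    rfl
  rw [IsAnalyticPoly, this]
  exact Submodule.subset_span ⟨Finsupp.single j 1, rfl⟩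

lemma coordFn_ne_zero (j : ℕ) : coordFn j ≠ 0 := by
  intro h
  have h1 := congrFun h (1 : Polytorus)
  simp [coordFn] at h1

/-- `‖f‖_{(H^∞)^*} = sup_j |c_j|` for linear functions `f = Σ c_j z_j`. -/
theorem dual_norm_inf_linear (c : ℕ → ℂ) (hc : Summable fun j => ‖c j‖ ^ 2) :
    dualNormInf (⇑(linearFn c)) = ⨆ j, ‖c j‖ := by
  classical
  set S := ⨆ j, ‖c j‖ with hS
  -- boundedness of coefficients
  have hM : ∀ j, ‖c j‖ ≤ max 1 (∑' j, ‖c j‖ ^ 2) := by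
    intro j
    rcases le_or_gt ‖c j‖ 1 with h | h
    · exact h.trans (le_max_left _ _)
    · refine le_trans ?_ (le_max_right _ _)
      calc ‖c j‖ ≤ ‖c j‖ ^ 2 := by nlinarith
        _ ≤ ∑' j, ‖c j‖ ^ 2 := hc.le_tsum j fun i _ => sq_nonneg _
  have hbdd : BddAbove (Set.range fun j => ‖c j‖) := ⟨_, by rintro x ⟨j, rfl⟩; exact hM j⟩
  have hS0 : 0 ≤ S := le_trans (norm_nonneg (c 0)) (le_ciSup hbdd 0)
  -- upper bound
  have hupper : ∀ t ∈ {t : ℝ | ∃ g : Polytorus → ℂ, IsAnalyticPoly g ∧ g ≠ 0 ∧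
      t = ‖pairing g ⇑(linearFn c)‖ / (eLpNorm g ⊤ muInf).toReal}, t ≤ S := by
    rintro t ⟨g, hg, hgne, rfl⟩
    have hcont := isAnalyticPoly_continuous hg
    set C := (eLpNorm g ⊤ muInf).toReal with hC
    have hCpos : 0 < C := by
      obtain ⟨x, hx⟩ := Function.ne_iff.1 hgne
      have hgx : (0:ℝ) < ‖g x‖ := by
        simp only [Pi.zero_apply] at hx
        exact norm_pos_iff.2 hx
      exact lt_of_lt_of_le hgx (norm_le_eLpNormTop hcont x)
    obtain ⟨hSig, hbound⟩ := tsum_norm_coefA_le hg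
    have hpair := pairing_eq c hc (memℒp_of_continuous hcont 2)
    have hs2 : Summable fun j => ‖(starRingEnd ℂ) (c j) * coefA g j‖ := by
      refine Summable.of_nonneg_of_le (fun j => norm_nonneg _) (fun j => ?_) (hSig.mul_left S)
      rw [norm_mul, RCLike.norm_conj]
      exact mul_le_mul_of_nonneg_right (le_ciSup hbdd j) (norm_nonneg _)
    have h1 : ‖pairing g ⇑(linearFn c)‖ ≤ S * C := by
      rw [hpair]
      calc ‖∑' j, (starRingEnd ℂ) (c j) * coefA g j‖
          ≤ ∑' j, ‖(starRingEnd ℂ) (c j) * coefA g j‖ := norm_tsum_le_tsum_norm hs2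
        _ ≤ ∑' j, S * ‖coefA g j‖ := by
            refine Summable.tsum_le_tsum (fun j => ?_) hs2 (hSig.mul_left S)
            rw [norm_mul, RCLike.norm_conj]
            exact mul_le_mul_of_nonneg_right (le_ciSup hbdd j) (norm_nonneg _)
        _ = S * ∑' j, ‖coefA g j‖ := tsum_mul_left
        _ ≤ S * C := mul_le_mul_of_nonneg_left hbound hS0
    rw [div_le_iff₀ hCpos]
    exact h1
  -- lower bound: each ‖c j‖ is attained
  have hmem : ∀ j, ‖c j‖ ∈ {t : ℝ | ∃ g : Polytorus → ℂ, IsAnalyticPoly g ∧ g ≠ 0 ∧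
      t = ‖pairing g ⇑(linearFn c)‖ / (eLpNorm g ⊤ muInf).toReal} := by
    intro j
    refine ⟨coordFn j, isAnalyticPoly_coordFn j, coordFn_ne_zero j, ?_⟩
    have hpair := pairing_eq c hc (memℒp_coordFn j)
    have hA : ∀ k, coefA (coordFn j) k = if k = j then 1 else 0 := by
      intro k
      have : coordFn j = monomial (Finsupp.single j 1) := by
        funext z
        rw [monomial_single, pow_one]
        rfl
      rw [this, coefA_monomial]
      by_cases hkj : k = j
      · subst hkj; simp
      · rw [if_neg, if_neg hkj]
        intro h'
        exact hkj (((Finsupp.single_left_inj one_ne_zero).1 h').symm)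
    have hterm : (fun k => (starRingEnd ℂ) (c k) * coefA (coordFn j) k)
        = fun k => if k = j then (starRingEnd ℂ) (c j) else 0 := by
      funext k
      rw [hA]
      by_cases hkj : k = j
      · subst hkj; simp
      · simp [hkj]
    rw [hpair, hterm, tsum_ite_eq j (fun _ => (starRingEnd ℂ) (c j)), eLpNorm_coordFn_top]
    rw [RCLike.norm_conj]
    norm_num
  rw [dualNormInf, hS]
  refine le_antisymm (Real.sSup_le hupper hS0) ?_
  exact ciSup_le fun j => le_csSup ⟨S, hupper⟩ (hmem j)
end

section
/- Let 1 ≤ p < ∞, let d ≥ 1, and let c_1, …, c_d be complex numbers. Then |c_1 + c_2 + ⋯ + c_d| · ‖z_1 + z_2 + ⋯ + z_d‖_{L^p(𝕋^d)} ≤ d · ‖c_1 z_1 + c_2 z_2 + ⋯ + c_d z_d‖_{L^p(𝕋^d)}. -/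
open MeasureTheory Complex Filter
open scoped ENNReal NNReal

/-- The normalized Lebesgue arc measure on the unit circle, i.e. its Haar probability
measure. -/
noncomputable def muCircle : Measure Circle := Measure.haarMeasure ⊤

instance : IsProbabilityMeasure muCircle :=
  ⟨by simpa [muCircle] using
    Measure.haarMeasure_self (K₀ := (⊤ : TopologicalSpace.PositiveCompacts Circle))⟩

/-- The probability measure `μ_d` on `𝕋^d`: the product of normalized Lebesgue arc
measures. -/
noncomputable def muD (d : ℕ) : Measure (Fin d → Circle) := Measure.pi fun _ => muCircle

/-- `|c_1 + ⋯ + c_d| ‖z_1 + ⋯ + z_d‖_{L^p(𝕋^d)} ≤ d ‖Σ c_j z_j‖_{L^p(𝕋^d)}`. -/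
theorem sum_coeff_mul_lp_le (p : ℝ) (hp : 1 ≤ p) (d : ℕ) (hd : 1 ≤ d) (c : Fin d → ℂ) :
    ‖∑ j, c j‖ * (∫ z : Fin d → Circle, ‖∑ j, (z j : ℂ)‖ ^ p ∂muD d) ^ (1 / p)
      ≤ d * (∫ z : Fin d → Circle, ‖∑ j, c j * (z j : ℂ)‖ ^ p ∂muD d) ^ (1 / p) := by
  haveI : NeZero d := ⟨by omega⟩
  haveI : IsProbabilityMeasure (muD d) := by unfold muD; infer_instance
  have hp0 : 0 < p := lt_of_lt_of_le one_pos hp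
  set q : ℝ≥0∞ := ENNReal.ofReal p with hq
  have hq0 : q ≠ 0 := by simp [hq, ENNReal.ofReal_eq_zero]; linarith
  have hqt : q ≠ ⊤ := ENNReal.ofReal_ne_top
  have hq1 : 1 ≤ q := by rw [hq, ← ENNReal.ofReal_one]; exact ENNReal.ofReal_le_ofReal hp
  have hqr : q.toReal = p := ENNReal.toReal_ofReal hp0.le
  set s : (Fin d → Circle) → ℂ := fun z => ∑ j, (z j : ℂ) with hs_def
  set f : (Fin d → Circle) → ℂ := fun z => ∑ j, c j * (z j : ℂ) with hf_def
  have hcont : ∀ j : Fin d, Continuous fun z : Fin d → Circle => (z j : ℂ) :=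
    fun j => continuous_subtype_val.comp (continuous_apply j)
  have hconts : Continuous s := continuous_finset_sum _ fun j _ => hcont j
  have hcontf : Continuous f := continuous_finset_sum _ fun j _ => (continuous_const.mul (hcont j))
  have hnorm1 : ∀ (z : Fin d → Circle) (j : Fin d), ‖(z j : ℂ)‖ = 1 := fun z j => by
    simp [Circle.norm_coe (z j)]
  have hmems : MemLp s q (muD d) := by
    refine MemLp.of_bound hconts.aestronglyMeasurable d ?_
    filter_upwards with z
    calc ‖s z‖ ≤ ∑ j : Fin d, ‖(z j : ℂ)‖ := norm_sum_le _ _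
      _ = d := by simp [hnorm1 z]
  have hmemf : MemLp f q (muD d) := by
    refine MemLp.of_bound hcontf.aestronglyMeasurable (∑ j, ‖c j‖) ?_
    filter_upwards with z
    calc ‖f z‖ ≤ ∑ j : Fin d, ‖c j * (z j : ℂ)‖ := norm_sum_le _ _
      _ = ∑ j, ‖c j‖ := by simp [hnorm1 z]
  -- the cyclic shift functions
  set F : Fin d → (Fin d → Circle) → ℂ := fun k z => ∑ j, c j * (z (j + k) : ℂ) with hF_def
  have hshift : ∀ (k : Fin d) (z : Fin d → Circle) (j : Fin d),
      (MeasurableEquiv.piCongrLeft (fun _ => Circle) (Equiv.subRight k)) z j = z (j + k) := by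
    intro k z j
    have h := Equiv.piCongrLeft_apply_apply (fun _ : Fin d => Circle) (Equiv.subRight k) z (j + k)
    rw [MeasurableEquiv.coe_piCongrLeft]
    simpa only [Equiv.subRight_apply, add_sub_cancel_right] using h
  have hFe : ∀ k, F k = f ∘ (MeasurableEquiv.piCongrLeft (fun _ => Circle) (Equiv.subRight k)) := by
    intro k
    funext z
    simp only [Function.comp_apply, hF_def, hf_def]
    exact Finset.sum_congr rfl fun j _ => by rw [hshift k z j]
  have hFsum : (fun z => (∑ j, c j) * s z) = ∑ k, F k := by
    funext z
    simp only [Finset.sum_apply, hF_def]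
    rw [Finset.sum_comm, Finset.sum_mul]
    refine Finset.sum_congr rfl fun j _ => ?_
    rw [← Finset.mul_sum]
    congr 1
    exact (Fintype.sum_equiv (Equiv.addLeft j) _ _ fun k => by simp [hs_def, add_comm]).symm
  have key : eLpNorm (fun z => (∑ j, c j) * s z) q (muD d) ≤ d * eLpNorm f q (muD d) := by
    rw [hFsum]
    calc eLpNorm (∑ k, F k) q (muD d) ≤ ∑ k, eLpNorm (F k) q (muD d) :=
          eLpNorm_sum_le (fun k _ =>
            (continuous_finset_sum _ fun j _ =>
              continuous_const.mul (hcont (j + k))).aestronglyMeasurable) hq1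
      _ = ∑ _k : Fin d, eLpNorm f q (muD d) := by
          refine Finset.sum_congr rfl fun k _ => ?_
          rw [hFe k]
          exact eLpNorm_comp_measurePreserving hmemf.aestronglyMeasurable
            (measurePreserving_piCongrLeft (fun _ => muCircle) (Equiv.subRight k))
      _ = d * eLpNorm f q (muD d) := by simp [Finset.sum_const, nsmul_eq_mul]
  have hsmul : eLpNorm (fun z => (∑ j, c j) * s z) q (muD d)
      = (‖∑ j, c j‖₊ : ℝ≥0∞) * eLpNorm s q (muD d) := by
    have := eLpNorm_const_smul (∑ j, c j) s q (muD d)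
    exact this
  have hes : eLpNorm s q (muD d)
      = ENNReal.ofReal ((∫ z, ‖s z‖ ^ p ∂muD d) ^ (1 / p)) := by
    rw [hmems.eLpNorm_eq_integral_rpow_norm hq0 hqt, hqr, one_div]
  have hef : eLpNorm f q (muD d)
      = ENNReal.ofReal ((∫ z, ‖f z‖ ^ p ∂muD d) ^ (1 / p)) := by
    rw [hmemf.eLpNorm_eq_integral_rpow_norm hq0 hqt, hqr, one_div]
  rw [hsmul, hes, hef] at key
  have hA : (0:ℝ) ≤ (∫ z, ‖s z‖ ^ p ∂muD d) ^ (1 / p) := by positivity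
  have hB : (0:ℝ) ≤ (∫ z, ‖f z‖ ^ p ∂muD d) ^ (1 / p) := by positivity
  have key2 : ENNReal.ofReal (‖∑ j, c j‖ * (∫ z, ‖s z‖ ^ p ∂muD d) ^ (1 / p))
      ≤ ENNReal.ofReal (d * (∫ z, ‖f z‖ ^ p ∂muD d) ^ (1 / p)) := by
    rw [ENNReal.ofReal_mul (norm_nonneg _), ENNReal.ofReal_mul (by positivity)]
    calc ENNReal.ofReal ‖∑ j, c j‖ * ENNReal.ofReal ((∫ z, ‖s z‖ ^ p ∂muD d) ^ (1 / p))
        = (‖∑ j, c j‖₊ : ℝ≥0∞) * ENNReal.ofReal ((∫ z, ‖s z‖ ^ p ∂muD d) ^ (1 / p)) := by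
          rw [ENNReal.ofReal, Real.toNNReal_eq_nnnorm_of_nonneg (norm_nonneg _), nnnorm_norm]
      _ ≤ (d : ℝ≥0∞) * ENNReal.ofReal ((∫ z, ‖f z‖ ^ p ∂muD d) ^ (1 / p)) := key
      _ = ENNReal.ofReal (d : ℝ) * ENNReal.ofReal ((∫ z, ‖f z‖ ^ p ∂muD d) ^ (1 / p)) := by
          simp [ENNReal.ofReal_natCast]
  have := (ENNReal.ofReal_le_ofReal_iff (by positivity)).1 key2
  simpa [hs_def, hf_def] using this
end

section
/- Let p > 0 be a real number and let k ∈ ℤ. Then (1/2π) ∫_{-π}^{π} |1 + e^{iθ}|^{p-2} (1 + e^{iθ}) e^{-ikθ} dθ = Γ(p) · (1/Γ(p/2 + 1 - k)) · (1/Γ(p/2 + k)), where 1/Γ denotes the reciprocal Gamma function, taken to be 0 at nonpositive integers. Equivalently, the left-hand side equals 1/(p · B((p + 2 - 2k)/2, (p + 2k)/2)) where B is the Beta function, whenever both Beta arguments are positive. -/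
open Complex

open MeasureTheory Set intervalIntegral Complex Real

noncomputable def cc (p θ : ℝ) : ℝ := (2 * Real.cos (θ / 2)) ^ (p - 1)

lemma cos_half_pos {θ : ℝ} (hθ : θ ∈ Set.Ioo (-Real.pi) Real.pi) : 0 < Real.cos (θ / 2) := by
  apply Real.cos_pos_of_mem_Ioo
  constructor <;> [linarith [hθ.1]; linarith [hθ.2]]

lemma cos_half_nonneg {θ : ℝ} (hθ : θ ∈ Set.Icc (-Real.pi) Real.pi) : 0 ≤ Real.cos (θ / 2) := by
  apply Real.cos_nonneg_of_mem_Icc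
  constructor <;> [linarith [hθ.1]; linarith [hθ.2]]

lemma one_add_exp (θ : ℝ) :
    1 + Complex.exp ((θ : ℂ) * Complex.I)
      = ((2 * Real.cos (θ / 2) : ℝ) : ℂ) * Complex.exp (((θ / 2 : ℝ) : ℂ) * Complex.I) := by
  have h1 : Complex.cos ((θ / 2 : ℝ) : ℂ) ^ 2 + Complex.sin ((θ / 2 : ℝ) : ℂ) ^ 2 = 1 :=
    Complex.cos_sq_add_sin_sq _
  rw [show ((θ : ℂ) * Complex.I) = ((θ / 2 : ℝ) : ℂ) * Complex.I + ((θ / 2 : ℝ) : ℂ) * Complex.I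
      by push_cast; ring,
    Complex.exp_add, Complex.exp_mul_I]
  push_cast [Complex.ofReal_cos] at h1 ⊢
  linear_combination (Complex.sin ((θ:ℂ)/2))^2 * Complex.I_sq - h1

lemma norm_one_add {θ : ℝ} (hθ : θ ∈ Set.Icc (-Real.pi) Real.pi) :
    ‖1 + Complex.exp ((θ : ℂ) * Complex.I)‖ = 2 * Real.cos (θ / 2) := by
  have h0 : (0:ℝ) ≤ 2 * Real.cos (θ / 2) := by have := cos_half_nonneg hθ; positivity
  calc ‖1 + Complex.exp ((θ:ℂ)*Complex.I)‖
      = ‖((2*Real.cos (θ/2):ℝ):ℂ)‖ * ‖Complex.exp (((θ/2:ℝ):ℂ)*Complex.I)‖ := by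
        rw [one_add_exp, norm_mul]
    _ = 2 * Real.cos (θ/2) := by
        rw [Complex.norm_exp_ofReal_mul_I, mul_one,
          Complex.norm_real, Real.norm_eq_abs, _root_.abs_of_nonneg h0]

lemma cc_meas (p : ℝ) : Measurable (cc p) := by unfold cc; measurability

lemma cc_int_half (p : ℝ) (hp : 0 < p) : IntervalIntegrable (cc p) volume 0 Real.pi := by
  have hπ := Real.pi_pos
  have hg : IntervalIntegrable
      (fun θ => 2 ^ (p-1) + (2/Real.pi) ^ (p-1) * (Real.pi - θ) ^ (p-1)) volume 0 Real.pi := by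
    apply intervalIntegrable_const.add
    apply IntervalIntegrable.const_mul
    have h := (intervalIntegrable_rpow' (a := 0) (b := Real.pi)
      (r := p - 1) (by linarith)).comp_sub_left Real.pi
    simpa using h.symm
  refine hg.mono_fun' ((cc_meas p).aestronglyMeasurable) ?_
  rw [Filter.EventuallyLE, ae_restrict_iff' measurableSet_uIoc]
  refine Filter.Eventually.of_forall (fun θ hθ => ?_)
  rw [Set.uIoc_of_le hπ.le] at hθ
  have h0θ : 0 < θ := hθ.1
  have hθπ : θ ≤ Real.pi := hθ.2
  have hcosnn : 0 ≤ Real.cos (θ/2) := cos_half_nonneg ⟨by linarith, hθπ⟩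
  have hccnn : 0 ≤ cc p θ := Real.rpow_nonneg (by linarith) _
  rw [Real.norm_eq_abs, _root_.abs_of_nonneg hccnn]
  have hterm2 : 0 ≤ (2/Real.pi) ^ (p-1) * (Real.pi - θ) ^ (p-1) := by
    apply mul_nonneg <;> apply Real.rpow_nonneg
    · positivity
    · linarith
  rcases le_or_gt 1 p with h1p | h1p
  · have : cc p θ ≤ 2 ^ (p-1) := by
      apply Real.rpow_le_rpow (by linarith) ?_ (by linarith)
      nlinarith [Real.cos_le_one (θ/2)]
    linarith
  · -- p < 1
    rcases eq_or_lt_of_le hθπ with rfl | hlt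
    · have : cc p Real.pi = 0 := by
        simp [cc, Real.cos_pi_div_two, Real.zero_rpow (show p - 1 ≠ 0 by linarith)]
      rw [this]
      positivity
    · have hsin : (2/Real.pi) * ((Real.pi - θ)/2) ≤ Real.sin ((Real.pi - θ)/2) :=
        Real.mul_le_sin (by linarith) (by linarith)
      have hcos_eq : Real.cos (θ/2) = Real.sin ((Real.pi - θ)/2) := by
        rw [← Real.cos_pi_div_two_sub]; ring_nf
      have hbase : (2/Real.pi) * (Real.pi - θ) ≤ 2 * Real.cos (θ/2) := by
        rw [hcos_eq]; nlinarith
      have hbpos : 0 < (2/Real.pi) * (Real.pi - θ) := by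
        apply mul_pos (by positivity); linarith
      have : cc p θ ≤ ((2/Real.pi) * (Real.pi - θ)) ^ (p-1) :=
        Real.rpow_le_rpow_of_nonpos hbpos hbase (by linarith)
      have heq : ((2/Real.pi) * (Real.pi - θ)) ^ (p-1)
          = (2/Real.pi) ^ (p-1) * (Real.pi - θ) ^ (p-1) :=
        Real.mul_rpow (by positivity) (by linarith)
      have h2 : (0:ℝ) ≤ 2 ^ (p-1) := Real.rpow_nonneg (by norm_num) _
      rw [heq] at this
      linarith

lemma cc_int (p : ℝ) (hp : 0 < p) : IntervalIntegrable (cc p) volume (-Real.pi) Real.pi := by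
  refine IntervalIntegrable.trans (b := 0) ?_ (cc_int_half p hp)
  have h := ((IntervalIntegrable.iff_comp_neg (by simp)).mp (cc_int_half p hp)).symm
  have he : (fun x => cc p (-x)) = cc p := by
    funext x; simp [cc, neg_div, Real.cos_neg]
  rw [he] at h
  simpa using h

noncomputable def ff (p b θ : ℝ) : ℂ := (cc p θ : ℂ) * Complex.exp ((b : ℂ) * θ * Complex.I)

noncomputable def Jf (p b : ℝ) : ℂ := ∫ θ in (-Real.pi)..Real.pi, ff p b θ

lemma ff_int (p : ℝ) (hp : 0 < p) (b : ℝ) :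
    IntervalIntegrable (ff p b) volume (-Real.pi) Real.pi := by
  refine (cc_int p hp).mono_fun ?_ ?_
  · apply Measurable.aestronglyMeasurable
    apply Measurable.mul
    · exact Complex.measurable_ofReal.comp (cc_meas p)
    · apply Continuous.measurable; continuity
  · refine Filter.Eventually.of_forall (fun θ => ?_)
    have : ((b:ℂ) * θ * Complex.I) = ((b * θ : ℝ) : ℂ) * Complex.I := by push_cast; ring
    simp only [ff]
    rw [norm_mul, this, Complex.norm_exp_ofReal_mul_I,
      mul_one, Complex.norm_real]

lemma deriv_identity (p : ℝ) (hp : 0 < p) (k : ℝ) {θ : ℝ}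
    (hθ : θ ∈ Set.Ioo (-Real.pi) Real.pi) :
    HasDerivAt (fun θ : ℝ => (((2 * Real.cos (θ/2)) ^ p : ℝ) : ℂ)
        * Complex.exp (((-k : ℝ) : ℂ) * θ * Complex.I))
      (Complex.I * ((p/2 - k : ℝ) : ℂ) * ff p (1/2 - k) θ
        + Complex.I * ((-(p/2) - k : ℝ) : ℂ) * ff p (1/2 - (k+1)) θ) θ := by
  have hc : 0 < 2 * Real.cos (θ/2) := by have := cos_half_pos hθ; positivity
  -- derivative of the real factor
  have hu : HasDerivAt (fun θ : ℝ => 2 * Real.cos (θ/2)) (-Real.sin (θ/2)) θ := by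
    have h1 : HasDerivAt (fun θ : ℝ => θ/2) (1/2) θ := (hasDerivAt_id θ).div_const 2
    have h2 := (Real.hasDerivAt_cos (θ/2)).comp θ h1
    have h3 := h2.const_mul (2:ℝ)
    exact h3.congr_deriv (by ring)
  have hA : HasDerivAt (fun θ : ℝ => (2 * Real.cos (θ/2)) ^ p)
      (p * (2 * Real.cos (θ/2)) ^ (p-1) * (-Real.sin (θ/2))) θ := by
    have := (Real.hasDerivAt_rpow_const (p := p) (Or.inl hc.ne')).comp θ hu
    exact this
  have hE : HasDerivAt (fun θ : ℝ => Complex.exp (((-k : ℝ) : ℂ) * θ * Complex.I))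
      ((((-k : ℝ) : ℂ) * Complex.I) * Complex.exp (((-k : ℝ) : ℂ) * θ * Complex.I)) θ := by
    have h1 : HasDerivAt (fun θ : ℝ => ((-k : ℝ) : ℂ) * θ * Complex.I)
        (((-k : ℝ) : ℂ) * Complex.I) θ := by
      have := ((Complex.ofRealCLM.hasDerivAt (x := θ)).const_mul ((-k : ℝ) : ℂ)).mul_const
        Complex.I
      simpa using this
    simpa [mul_comm] using h1.cexp
  have hG := (hA.ofReal_comp).mul hE
  refine hG.congr_deriv (Eq.symm ?_)
  -- now prove the algebraic identity of the derivative values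
  have hsplit : ((2 * Real.cos (θ/2)) ^ p : ℝ) = cc p θ * (2 * Real.cos (θ/2)) := by
    rw [cc, ← Real.rpow_add_one hc.ne']; norm_num
  have e1 : Complex.exp (((1/2 - k) : ℂ) * θ * Complex.I)
      = Complex.exp (((θ/2 : ℝ) : ℂ) * Complex.I)
        * Complex.exp (((-k : ℝ) : ℂ) * θ * Complex.I) := by
    rw [← Complex.exp_add]; congr 1; push_cast; ring
  have e2 : Complex.exp (((1/2 - (k+1)) : ℂ) * θ * Complex.I)
      = Complex.exp ((-((θ/2 : ℝ) : ℂ)) * Complex.I)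
        * Complex.exp (((-k : ℝ) : ℂ) * θ * Complex.I) := by
    rw [← Complex.exp_add]; congr 1; push_cast; ring
  have e3 : Complex.exp (((θ/2 : ℝ) : ℂ) * Complex.I)
      = (Real.cos (θ/2) : ℂ) + (Real.sin (θ/2) : ℂ) * Complex.I := by
    rw [Complex.exp_mul_I, Complex.ofReal_cos, Complex.ofReal_sin]
  have e4 : Complex.exp ((-((θ/2 : ℝ) : ℂ)) * Complex.I)
      = (Real.cos (θ/2) : ℂ) - (Real.sin (θ/2) : ℂ) * Complex.I := by
    rw [Complex.exp_mul_I, Complex.cos_neg, Complex.sin_neg, Complex.ofReal_cos,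
      Complex.ofReal_sin]; ring
  simp only [ff]
  rw [hsplit]
  push_cast at e1 e2 e3 e4 ⊢
  rw [e1, e2, e3, e4]
  rw [show ((2 * Real.cos (θ/2)) ^ (p-1) : ℝ) = cc p θ from rfl]
  linear_combination ((p:ℂ) * Complex.sin ((θ:ℂ)/2) * ((cc p θ : ℝ) : ℂ)
    * Complex.exp (-(k:ℂ) * (θ:ℂ) * Complex.I)) * Complex.I_sq

lemma Jf_rec (p : ℝ) (hp : 0 < p) (k : ℝ) :
    ((p/2 - k : ℝ) : ℂ) * Jf p (1/2 - k) = ((p/2 + k : ℝ) : ℂ) * Jf p (1/2 - (k+1)) := by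
  have hπ := Real.pi_pos
  set G : ℝ → ℂ := fun θ => (((2 * Real.cos (θ/2)) ^ p : ℝ) : ℂ)
      * Complex.exp (((-k : ℝ) : ℂ) * θ * Complex.I) with hGdef
  set G' : ℝ → ℂ := fun θ => Complex.I * ((p/2 - k : ℝ) : ℂ) * ff p (1/2 - k) θ
      + Complex.I * ((-(p/2) - k : ℝ) : ℂ) * ff p (1/2 - (k+1)) θ with hG'def
  have hcont : ContinuousOn G (Set.Icc (-Real.pi) Real.pi) := by
    apply Continuous.continuousOn
    apply Continuous.mul
    · apply Complex.continuous_ofReal.comp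
      exact (continuous_const.mul (Real.continuous_cos.comp
        (continuous_id.div_const 2))).rpow_const (fun x => Or.inr hp.le)
    · continuity
  have hderiv : ∀ x ∈ Set.Ioo (-Real.pi) Real.pi, HasDerivAt G (G' x) x :=
    fun x hx => deriv_identity p hp k hx
  have hint1 := (ff_int p hp (1/2 - k)).const_mul (Complex.I * ((p/2 - k : ℝ) : ℂ))
  have hint2 := (ff_int p hp (1/2 - (k+1))).const_mul (Complex.I * ((-(p/2) - k : ℝ) : ℂ))
  have hint : IntervalIntegrable G' volume (-Real.pi) Real.pi := hint1.add hint2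
  have hftc := intervalIntegral.integral_eq_sub_of_hasDerivAt_of_le (by linarith) hcont hderiv hint
  have hGpi : G Real.pi = 0 := by
    simp [hGdef, Real.cos_pi_div_two, Real.zero_rpow hp.ne']
  have hGmpi : G (-Real.pi) = 0 := by
    simp [hGdef, neg_div, Real.cos_neg, Real.cos_pi_div_two, Real.zero_rpow hp.ne']
  rw [hGpi, hGmpi, sub_zero] at hftc
  have hsplit : (∫ θ in (-Real.pi)..Real.pi, G' θ)
      = Complex.I * ((p/2 - k : ℝ) : ℂ) * Jf p (1/2 - k)
        + Complex.I * ((-(p/2) - k : ℝ) : ℂ) * Jf p (1/2 - (k+1)) := by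
    rw [hG'def]
    rw [intervalIntegral.integral_add hint1 hint2, intervalIntegral.integral_const_mul,
      intervalIntegral.integral_const_mul, Jf, Jf]
  rw [hsplit] at hftc
  have hgoal : Complex.I * (((p/2 - k : ℝ) : ℂ) * Jf p (1/2 - k))
      = Complex.I * (((p/2 + k : ℝ) : ℂ) * Jf p (1/2 - (k+1))) := by
    push_cast at hftc ⊢
    linear_combination hftc
  exact mul_left_cancel₀ Complex.I_ne_zero hgoal

lemma rpow_pred_mul {x : ℝ} (p : ℝ) (hp : 0 < p) (hx : 0 ≤ x) : x ^ (p-1) * x = x ^ p := by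
  rcases eq_or_lt_of_le hx with rfl | h
  · rw [mul_zero, Real.zero_rpow hp.ne']
  · rw [← Real.rpow_add_one h.ne']; norm_num

lemma Jf_symm (p : ℝ) : Jf p (-(1/2)) = Jf p (1/2) := by
  have h := intervalIntegral.integral_comp_neg (a := -Real.pi) (b := Real.pi)
    (fun θ => ff p (1/2) θ)
  rw [neg_neg] at h
  rw [Jf, Jf, ← h]
  congr 1
  funext θ
  simp only [ff]
  rw [show cc p (-θ) = cc p θ by simp [cc, neg_div, Real.cos_neg]]
  congr 2
  push_cast
  ring

lemma Jf_add (p : ℝ) (hp : 0 < p) :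
    Jf p (1/2) + Jf p (-(1/2))
      = ((∫ θ in (-Real.pi)..Real.pi, (2 * Real.cos (θ/2)) ^ p : ℝ) : ℂ) := by
  rw [Jf, Jf, ← intervalIntegral.integral_add (ff_int p hp (1/2)) (ff_int p hp (-(1/2)))]
  rw [← intervalIntegral.integral_ofReal]
  apply intervalIntegral.integral_congr
  intro θ hθ
  rw [Set.uIcc_of_le (by linarith [Real.pi_pos]) ] at hθ
  have hcos : 0 ≤ Real.cos (θ/2) := cos_half_nonneg hθ
  simp only [ff]
  have e3 : Complex.exp (((1:ℝ)/2 : ℂ) * θ * Complex.I)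
      = Complex.cos ((θ:ℂ)/2) + Complex.sin ((θ:ℂ)/2) * Complex.I := by
    rw [show ((1:ℝ)/2 : ℂ) * θ * Complex.I = ((θ:ℂ)/2) * Complex.I by push_cast; ring,
      Complex.exp_mul_I]
  have e4 : Complex.exp ((-(1/2) : ℝ) * (θ:ℂ) * Complex.I)
      = Complex.cos ((θ:ℂ)/2) - Complex.sin ((θ:ℂ)/2) * Complex.I := by
    rw [show ((-(1/2) : ℝ) : ℂ) * θ * Complex.I = (-((θ:ℂ)/2)) * Complex.I by push_cast; ring,
      Complex.exp_mul_I, Complex.cos_neg, Complex.sin_neg]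
    ring
  have hsplit : ((2 * Real.cos (θ/2)) ^ p : ℝ) = cc p θ * (2 * Real.cos (θ/2)) :=
    (rpow_pred_mul p hp (by linarith)).symm
  rw [hsplit]
  push_cast at e3 e4 ⊢
  rw [e3, e4]
  ring

lemma D_eq (p : ℝ) (hp : 0 < p) :
    (∫ θ in (-Real.pi)..Real.pi, (2 * Real.cos (θ/2)) ^ p)
      = 4 * ∫ u in (0:ℝ)..(Real.pi/2), (2 * Real.cos u) ^ p := by
  have hc : Continuous fun u : ℝ => (2 * Real.cos u) ^ p :=
    (continuous_const.mul Real.continuous_cos).rpow_const (fun x => Or.inr hp.le)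
  have h1 : (∫ θ in (-Real.pi)..Real.pi, (2 * Real.cos (θ/2)) ^ p)
      = (2:ℝ) • ∫ u in (-(Real.pi/2))..(Real.pi/2), (2 * Real.cos u) ^ p := by
    have := intervalIntegral.integral_comp_div (a := -Real.pi) (b := Real.pi)
      (f := fun u => (2 * Real.cos u) ^ p) (c := (2:ℝ)) two_ne_zero
    simpa [neg_div] using this
  have h3 : (∫ u in (-(Real.pi/2))..(0:ℝ), (2 * Real.cos u) ^ p)
      = ∫ u in (0:ℝ)..(Real.pi/2), (2 * Real.cos u) ^ p := by
    have := intervalIntegral.integral_comp_neg (a := (0:ℝ)) (b := Real.pi/2)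
      (fun u => (2 * Real.cos u) ^ p)
    simp only [Real.cos_neg, neg_zero] at this
    exact this.symm
  have h2 := intervalIntegral.integral_add_adjacent_intervals
    (a := -(Real.pi/2)) (b := 0) (c := Real.pi/2) (μ := volume)
    (hc.intervalIntegrable _ _) (hc.intervalIntegrable _ _)
  rw [h1, smul_eq_mul, ← h2, h3]
  ring

lemma cosp_eq (p : ℝ) (hp : 0 < p) :
    (∫ u in (0:ℝ)..(Real.pi/2), (2 * Real.cos u) ^ p)
      = 2 ^ p * ∫ u in (0:ℝ)..(Real.pi/2), (Real.cos u) ^ p := by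
  rw [← intervalIntegral.integral_const_mul]
  apply intervalIntegral.integral_congr
  intro x hx
  rw [Set.uIcc_of_le (by positivity)] at hx
  have hcos : 0 ≤ Real.cos x :=
    Real.cos_nonneg_of_mem_Icc ⟨by linarith [hx.1, Real.pi_pos], hx.2⟩
  exact Real.mul_rpow (by norm_num) hcos

noncomputable def gg (p t : ℝ) : ℝ := (1 - t^2) ^ ((p-1)/2)

lemma gg_int (p : ℝ) (hp : 0 < p) : IntegrableOn (gg p) (Set.Icc (0:ℝ) 1) := by
  have hii : IntervalIntegrable (gg p) volume 0 1 := by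
    have hgbd : IntervalIntegrable (fun t : ℝ => 1 + (1 - t) ^ ((p-1)/2)) volume 0 1 := by
      apply intervalIntegrable_const.add
      have h := (intervalIntegrable_rpow' (a := 0) (b := 1)
        (r := (p-1)/2) (by linarith)).comp_sub_left 1
      simpa using h.symm
    refine hgbd.mono_fun' ?_ ?_
    · apply Measurable.aestronglyMeasurable
      unfold gg; measurability
    · rw [Filter.EventuallyLE, ae_restrict_iff' measurableSet_uIoc]
      refine Filter.Eventually.of_forall (fun t ht => ?_)
      rw [Set.uIoc_of_le (by norm_num)] at ht
      have h0t : 0 < t := ht.1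
      have ht1 : t ≤ 1 := ht.2
      have hbnn : (0:ℝ) ≤ 1 - t^2 := by nlinarith
      have hggnn : 0 ≤ gg p t := Real.rpow_nonneg hbnn _
      have hrnn : (0:ℝ) ≤ (1 - t) ^ ((p-1)/2) := Real.rpow_nonneg (by linarith) _
      rw [Real.norm_eq_abs, _root_.abs_of_nonneg hggnn]
      rcases le_or_gt 1 p with h1p | h1p
      · have : gg p t ≤ 1 := Real.rpow_le_one hbnn (by nlinarith) (by linarith)
        linarith
      · rcases eq_or_lt_of_le ht1 with rfl | hlt
        · have : gg p 1 = 0 := by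
            simp [gg, Real.zero_rpow (show (p-1)/2 ≠ 0 by intro h; nlinarith
              [(div_eq_zero_iff.mp h)])]
          rw [this]; positivity
        · have hb1 : 0 < 1 - t := by linarith
          have hle : 1 - t ≤ 1 - t^2 := by nlinarith
          have := Real.rpow_le_rpow_of_nonpos hb1 hle (by linarith : (p-1)/2 ≤ 0)
          unfold gg
          linarith
  exact (integrableOn_Icc_iff_integrableOn_Ioc (by simp)).mpr hii.1

lemma A_eq (p : ℝ) (hp : 0 < p) :
    (∫ u in (0:ℝ)..(Real.pi/2), (Real.cos u) ^ p) = ∫ t in (0:ℝ)..1, gg p t := by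
  have hπ := Real.pi_pos
  have hpt : ∀ x ∈ Set.Icc (0:ℝ) (Real.pi/2),
      Real.cos x • (gg p ∘ Real.sin) x = (Real.cos x) ^ p := by
    intro x hx
    have hcos : 0 ≤ Real.cos x := Real.cos_nonneg_of_mem_Icc ⟨by linarith [hx.1], hx.2⟩
    have h1 : (1 : ℝ) - Real.sin x ^ 2 = Real.cos x ^ 2 := by
      nlinarith [Real.sin_sq_add_cos_sq x]
    simp only [Function.comp, gg, smul_eq_mul]
    rw [h1, ← Real.rpow_natCast (Real.cos x) 2, ← Real.rpow_mul hcos]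
    push_cast
    rw [show (2:ℝ) * ((p-1)/2) = p - 1 by ring, mul_comm]
    exact rpow_pred_mul p hp hcos
  have hcontg : Continuous fun x : ℝ => (Real.cos x) ^ p :=
    Real.continuous_cos.rpow_const (fun x => Or.inr hp.le)
  have h := intervalIntegral.integral_comp_smul_deriv''' (a := (0:ℝ)) (b := Real.pi/2)
    (f := Real.sin) (f' := Real.cos) (g := gg p)
    (Real.continuous_sin.continuousOn)
    (fun x _ => (Real.hasDerivAt_sin x).hasDerivWithinAt)
    ?_ ?_ ?_
  · rw [Real.sin_zero, Real.sin_pi_div_two] at h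
    rw [← h]
    apply intervalIntegral.integral_congr
    intro x hx
    rw [Set.uIcc_of_le (by positivity)] at hx
    exact (hpt x hx).symm
  · -- continuity of gg on sin '' Ioo
    apply ContinuousOn.rpow_const
    · exact (continuous_const.sub (continuous_pow 2)).continuousOn
    · rintro t ⟨x, hx, rfl⟩
      rw [min_eq_left (by positivity), max_eq_right (by positivity)] at hx
      left
      have hx1 : 0 < x := hx.1
      have hx2 : x < Real.pi/2 := hx.2
      have : (1:ℝ) - Real.sin x ^ 2 = Real.cos x ^ 2 := by
        nlinarith [Real.sin_sq_add_cos_sq x]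
      rw [this]
      have : 0 < Real.cos x := Real.cos_pos_of_mem_Ioo ⟨by linarith, hx2⟩
      positivity
  · -- integrability of gg on image
    apply (gg_int p hp).mono_set
    rintro t ⟨x, hx, rfl⟩
    rw [Set.uIcc_of_le (by positivity)] at hx
    exact ⟨Real.sin_nonneg_of_nonneg_of_le_pi hx.1 (le_trans hx.2 (by linarith)),
      Real.sin_le_one x⟩
  · -- integrability of x ↦ cos x • gg (sin x)
    rw [Set.uIcc_of_le (by positivity)]
    exact (hcontg.integrableOn_Icc).congr_fun
      (fun x hx => (hpt x hx).symm) measurableSet_Icc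

noncomputable def bb (p s : ℝ) : ℝ := s ^ (-(1/2) : ℝ) * (1-s) ^ ((p-1)/2)

lemma beta_pt (p : ℝ) {x : ℝ} (hx : x ∈ Set.Icc (0:ℝ) 1) :
    ((bb p x : ℝ) : ℂ) = (x:ℂ) ^ ((((1:ℝ)/2 : ℝ):ℂ) - 1)
      * (1 - (x:ℂ)) ^ (((((p+1)/2 : ℝ)):ℂ) - 1) := by
  have h1 : ((((1:ℝ)/2 : ℝ):ℂ) - 1) = (((-(1/2) : ℝ)):ℂ) := by push_cast; norm_num
  have h2 : (((((p+1)/2 : ℝ)):ℂ) - 1) = ((((p-1)/2 : ℝ)):ℂ) := by push_cast; ring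
  have h3 : (1 - (x:ℂ)) = (((1 - x : ℝ)):ℂ) := by push_cast; ring
  rw [h1, h2, h3, ← Complex.ofReal_cpow hx.1, ← Complex.ofReal_cpow (by linarith [hx.2])]
  push_cast [bb]
  ring

lemma beta_conv (p : ℝ) (hp : 0 < p) : IntervalIntegrable (bb p) volume 0 1 := by
  have hconv := Complex.betaIntegral_convergent (u := (((1:ℝ)/2 : ℝ):ℂ))
    (v := ((((p+1)/2 : ℝ)):ℂ)) (by simp only [Complex.ofReal_re]; norm_num)
    (by simp only [Complex.ofReal_re]; linarith)
  refine hconv.mono_fun ?_ ?_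
  · apply Measurable.aestronglyMeasurable
    unfold bb
    have hm : Measurable fun s : ℝ => 1 - s := measurable_const.sub measurable_id'
    measurability
  · rw [Filter.EventuallyLE, ae_restrict_iff' measurableSet_uIoc]
    refine Filter.Eventually.of_forall (fun s hs => ?_)
    rw [Set.uIoc_of_le (by norm_num)] at hs
    have h := beta_pt p (⟨hs.1.le, hs.2⟩ : s ∈ Set.Icc (0:ℝ) 1)
    rw [← h, Complex.norm_real]

lemma Bval_eq (p : ℝ) (hp : 0 < p) :
    (∫ s in (0:ℝ)..1, bb p s)
      = Real.Gamma (1/2) * Real.Gamma ((p+1)/2) / Real.Gamma (1/2 + (p+1)/2) := by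
  have hu : 0 < Complex.re (((1:ℝ)/2 : ℝ):ℂ) := by
    simp only [Complex.ofReal_re]; norm_num
  have hv : 0 < Complex.re ((((p+1)/2 : ℝ)):ℂ) := by
    simp only [Complex.ofReal_re]; linarith
  have hB := Complex.Gamma_mul_Gamma_eq_betaIntegral hu hv
  have hGne : Complex.Gamma ((((1:ℝ)/2 : ℝ):ℂ) + (((p+1)/2 : ℝ):ℂ)) ≠ 0 := by
    apply Complex.Gamma_ne_zero_of_re_pos
    simp only [Complex.add_re, Complex.ofReal_re]; linarith
  have hval : Complex.betaIntegral (((1:ℝ)/2 : ℝ):ℂ) ((((p+1)/2 : ℝ)):ℂ)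
      = ((∫ s in (0:ℝ)..1, bb p s : ℝ) : ℂ) := by
    rw [Complex.betaIntegral, ← intervalIntegral.integral_ofReal]
    apply intervalIntegral.integral_congr
    intro x hx
    rw [Set.uIcc_of_le (by norm_num)] at hx
    exact (beta_pt p hx).symm
  rw [hval] at hB
  have hG2 := Real.Gamma_pos_of_pos (show (0:ℝ) < 1/2 + (p+1)/2 by linarith)
  have hBr : Real.Gamma (1/2) * Real.Gamma ((p+1)/2)
      = Real.Gamma (1/2 + (p+1)/2) * ∫ s in (0:ℝ)..1, bb p s := by
    rw [← Complex.ofReal_add, Complex.Gamma_ofReal, Complex.Gamma_ofReal,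
      Complex.Gamma_ofReal] at hB
    exact_mod_cast hB
  rw [eq_div_iff hG2.ne']
  linear_combination -hBr

lemma sub2 (p : ℝ) (hp : 0 < p) :
    (∫ t in (0:ℝ)..1, gg p t) = (∫ s in (0:ℝ)..1, bb p s) / 2 := by
  have hpt2 : ∀ s ∈ Set.Icc (0:ℝ) 1,
      (1/(2*Real.sqrt s)) • gg p (Real.sqrt s) = bb p s / 2 := by
    intro s hs
    have hs0 : 0 ≤ s := hs.1
    have hsq : Real.sqrt s ^ 2 = s := Real.sq_sqrt hs0
    simp only [gg, bb, smul_eq_mul, hsq]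
    rcases eq_or_lt_of_le hs0 with rfl | hpos
    · rw [Real.sqrt_zero, Real.zero_rpow (by norm_num : -(1/2 : ℝ) ≠ 0)]
      norm_num
    · have h12 : s ^ (-(1/2):ℝ) = (Real.sqrt s)⁻¹ := by
        rw [Real.rpow_neg hs0, Real.sqrt_eq_rpow]
      rw [h12]
      ring
  have h := intervalIntegral.integral_comp_smul_deriv''' (a := (0:ℝ)) (b := 1)
    (f := Real.sqrt) (f' := fun s => 1/(2*Real.sqrt s)) (g := gg p)
    (Real.continuous_sqrt.continuousOn)
    ?_ ?_ ?_ ?_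
  · rw [Real.sqrt_zero, Real.sqrt_one] at h
    rw [← h]
    rw [show (∫ s in (0:ℝ)..1, bb p s) / 2 = ∫ s in (0:ℝ)..1, bb p s / 2 by
      rw [intervalIntegral.integral_div]]
    apply intervalIntegral.integral_congr
    intro s hs
    rw [Set.uIcc_of_le (by norm_num)] at hs
    exact hpt2 s hs
  · intro x hx
    rw [show min (0:ℝ) 1 = 0 by norm_num, show max (0:ℝ) 1 = 1 by norm_num] at hx
    have := Real.hasDerivAt_sqrt (ne_of_gt hx.1)
    have h2 : (1:ℝ)/(2*Real.sqrt x) = 1/(2*Real.sqrt x) := rfl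
    exact this.hasDerivWithinAt
  · -- continuity of gg on sqrt '' Ioo 0 1
    apply ContinuousOn.rpow_const
    · exact (continuous_const.sub (continuous_pow 2)).continuousOn
    · rintro t ⟨x, hx, rfl⟩
      rw [show min (0:ℝ) 1 = 0 by norm_num, show max (0:ℝ) 1 = 1 by norm_num] at hx
      left
      rw [Real.sq_sqrt hx.1.le]
      intro hcon
      have : x = 1 := by linarith
      exact absurd this (ne_of_lt hx.2)
  · apply (gg_int p hp).mono_set
    rintro t ⟨x, hx, rfl⟩
    rw [Set.uIcc_of_le (by norm_num)] at hx
    exact ⟨Real.sqrt_nonneg x, Real.sqrt_le_one.mpr hx.2⟩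
  · rw [Set.uIcc_of_le (by norm_num)]
    have hbint : IntegrableOn (fun s => bb p s / 2) (Set.Icc (0:ℝ) 1) := by
      apply Integrable.div_const
      exact (integrableOn_Icc_iff_integrableOn_Ioc (by simp)).mpr (beta_conv p hp).1
    exact hbint.congr_fun (fun s hs => (hpt2 s hs).symm) measurableSet_Icc

lemma base_real (p : ℝ) (hp : 0 < p) :
    (1/(2*Real.pi)) * ((∫ θ in (-Real.pi)..Real.pi, (2 * Real.cos (θ/2)) ^ p) / 2)
      = Real.Gamma p * (Real.Gamma (p/2+1))⁻¹ * (Real.Gamma (p/2))⁻¹ := by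
  rw [D_eq p hp, cosp_eq p hp, A_eq p hp, sub2 p hp, Bval_eq p hp]
  have hsπ : Real.sqrt Real.pi * Real.sqrt Real.pi = Real.pi :=
    Real.mul_self_sqrt Real.pi_pos.le
  have hdup := Real.Gamma_mul_Gamma_add_half (p/2)
  rw [show p/2 + 1/2 = (p+1)/2 by ring, show 2*(p/2) = p by ring] at hdup
  rw [Real.Gamma_one_half_eq, show (1:ℝ)/2 + (p+1)/2 = p/2 + 1 by ring]
  have h22 : (2:ℝ)^p * 2^(1-p) = 2 := by
    rw [← Real.rpow_add two_pos]; norm_num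
  have hG1 : 0 < Real.Gamma (p/2) := Real.Gamma_pos_of_pos (by linarith)
  have hG2 : 0 < Real.Gamma (p/2+1) := Real.Gamma_pos_of_pos (by linarith)
  have hG3 : 0 < Real.Gamma ((p+1)/2) := Real.Gamma_pos_of_pos (by linarith)
  have hπ := Real.pi_pos
  have hsπpos : 0 < Real.sqrt Real.pi := Real.sqrt_pos.mpr hπ
  have key : (2:ℝ)^p * Real.sqrt Real.pi * (Real.Gamma ((p+1)/2) * Real.Gamma (p/2))
      = 2 * Real.pi * Real.Gamma p := by
    linear_combination ((2:ℝ)^p * Real.sqrt Real.pi) * hdup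
      + (Real.Gamma p * Real.sqrt Real.pi * Real.sqrt Real.pi) * h22
      + (2 * Real.Gamma p) * hsπ
  field_simp
  linear_combination 4 * key

lemma base (p : ℝ) (hp : 0 < p) :
    (1/(2*Real.pi) : ℝ) • Jf p (1/2)
      = ((Real.Gamma p * (Real.Gamma (p/2+1))⁻¹ * (Real.Gamma (p/2))⁻¹ : ℝ) : ℂ) := by
  have h2J : Jf p (1/2)
      = ((∫ θ in (-Real.pi)..Real.pi, (2 * Real.cos (θ/2)) ^ p : ℝ) : ℂ) / 2 := by
    have h := Jf_add p hp
    rw [Jf_symm p] at h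
    linear_combination h / 2
  rw [h2J, Complex.real_smul,
    show ((1/(2*Real.pi) : ℝ) : ℂ)
        * (((∫ θ in (-Real.pi)..Real.pi, (2 * Real.cos (θ/2)) ^ p : ℝ) : ℂ) / 2)
      = (((1/(2*Real.pi)) * ((∫ θ in (-Real.pi)..Real.pi, (2 * Real.cos (θ/2)) ^ p) / 2) : ℝ) : ℂ)
      by push_cast; ring,
    base_real p hp]

lemma recip_gamma (x : ℝ) : (Real.Gamma x)⁻¹ = x * (Real.Gamma (x+1))⁻¹ := by
  rcases eq_or_ne x 0 with rfl | hx
  · simp [Real.Gamma_zero]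
  · rw [Real.Gamma_add_one hx, mul_inv, ← mul_assoc, mul_inv_cancel₀ hx, one_mul]

noncomputable def Fr (p x : ℝ) : ℝ :=
  Real.Gamma p * (Real.Gamma (p/2+1-x))⁻¹ * (Real.Gamma (p/2+x))⁻¹

lemma Fr_rec (p x : ℝ) : (p/2 - x) * Fr p x = (p/2 + x) * Fr p (x+1) := by
  have h1 := recip_gamma (p/2 - x)
  have h2 := recip_gamma (p/2 + x)
  rw [show p/2 - x + 1 = p/2 + 1 - x by ring] at h1
  rw [show p/2 + x + 1 = p/2 + (x+1) by ring] at h2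
  unfold Fr
  rw [show p/2 + 1 - (x+1) = p/2 - x by ring]
  linear_combination (-(Real.Gamma p * (Real.Gamma (p/2+x))⁻¹)) * h1
    + (Real.Gamma p * (Real.Gamma (p/2-x))⁻¹) * h2

lemma step_up (p : ℝ) (hp : 0 < p) (r : ℝ) (hne : p/2 + r ≠ 0)
    (h : (1/(2*Real.pi) : ℝ) • Jf p (1/2 - r) = ((Fr p r : ℝ) : ℂ)) :
    (1/(2*Real.pi) : ℝ) • Jf p (1/2 - (r+1)) = ((Fr p (r+1) : ℝ) : ℂ) := by
  have hrec := Jf_rec p hp r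
  have hFc := congrArg (Complex.ofReal) (Fr_rec p r)
  have hnec : ((p/2 + r : ℝ) : ℂ) ≠ 0 := Complex.ofReal_ne_zero.mpr hne
  rw [Complex.real_smul] at h ⊢
  apply mul_left_cancel₀ hnec
  push_cast at h hrec hFc ⊢
  linear_combination (-(1/(2*(Real.pi:ℂ)))) * hrec + ((p:ℂ)/2 - r) * h + hFc

lemma step_down (p : ℝ) (hp : 0 < p) (r : ℝ) (hne : p/2 - r ≠ 0)
    (h : (1/(2*Real.pi) : ℝ) • Jf p (1/2 - (r+1)) = ((Fr p (r+1) : ℝ) : ℂ)) :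
    (1/(2*Real.pi) : ℝ) • Jf p (1/2 - r) = ((Fr p r : ℝ) : ℂ) := by
  have hrec := Jf_rec p hp r
  have hFc := congrArg (Complex.ofReal) (Fr_rec p r)
  have hnec : ((p/2 - r : ℝ) : ℂ) ≠ 0 := Complex.ofReal_ne_zero.mpr hne
  rw [Complex.real_smul] at h ⊢
  apply mul_left_cancel₀ hnec
  push_cast at h hrec hFc ⊢
  linear_combination (1/(2*(Real.pi:ℂ))) * hrec + ((p:ℂ)/2 + r) * h - hFc

lemma key (p : ℝ) (hp : 0 < p) : ∀ k : ℤ,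
    (1/(2*Real.pi) : ℝ) • Jf p (1/2 - (k:ℝ)) = ((Fr p (k:ℝ) : ℝ) : ℂ) := by
  intro k
  induction k using Int.induction_on with
  | zero =>
    have hb := base p hp
    have hF : Fr p ((0:ℤ):ℝ) = Real.Gamma p * (Real.Gamma (p/2+1))⁻¹ * (Real.Gamma (p/2))⁻¹ := by
      unfold Fr; norm_num
    rw [hF, show ((0:ℤ):ℝ) = 0 by norm_num, sub_zero]
    exact hb
  | succ i ih =>
    rw [show (((i:ℤ)+1 :ℤ):ℝ) = (i:ℝ)+1 by push_cast; ring]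
    rw [show (((i:ℤ)):ℝ) = (i:ℝ) by push_cast; ring] at ih
    exact step_up p hp (i:ℝ)
      (by have h1 : (0:ℝ) ≤ (i:ℝ) := Nat.cast_nonneg i; intro hc; nlinarith) ih
  | pred i ih =>
    rw [show ((-(i:ℤ)-1 :ℤ):ℝ) = -(i:ℝ)-1 by push_cast; ring]
    rw [show ((-(i:ℤ) :ℤ):ℝ) = -(i:ℝ) by push_cast; ring] at ih
    have ih' : (1/(2*Real.pi) : ℝ) • Jf p (1/2 - ((-(i:ℝ)-1)+1))
        = ((Fr p ((-(i:ℝ)-1)+1) : ℝ) : ℂ) := by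
      rw [show (-(i:ℝ)-1)+1 = -(i:ℝ) by ring]
      exact ih
    exact step_down p hp (-(i:ℝ)-1)
      (by have h1 : (0:ℝ) ≤ (i:ℝ) := Nat.cast_nonneg i; intro hc; nlinarith) ih'

lemma integrand_eq (p : ℝ) (hp : 0 < p) (k : ℤ) {θ : ℝ}
    (hθ : θ ∈ Set.Ioo (-Real.pi) Real.pi) :
    ((‖1 + Complex.exp ((θ : ℂ) * Complex.I)‖ ^ (p - 2) : ℝ) : ℂ)
        * (1 + Complex.exp ((θ : ℂ) * Complex.I))
        * Complex.exp (-(k : ℂ) * (θ : ℂ) * Complex.I)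
      = ff p (1/2 - (k:ℝ)) θ := by
  have hc : 0 < 2 * Real.cos (θ/2) := by have := cos_half_pos hθ; positivity
  rw [norm_one_add (Set.mem_Icc_of_Ioo hθ), one_add_exp]
  have h1 : ((2 * Real.cos (θ/2)) ^ (p-2)) * (2 * Real.cos (θ/2)) = cc p θ := by
    rw [cc, show p - 1 = (p-2)+1 by ring, Real.rpow_add_one hc.ne']
  have h2 : Complex.exp (((θ/2 : ℝ) : ℂ) * Complex.I)
        * Complex.exp (-(k : ℂ) * (θ : ℂ) * Complex.I)
      = Complex.exp (((1/2 - (k:ℝ) : ℝ) : ℂ) * θ * Complex.I) := by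
    rw [← Complex.exp_add]; congr 1; push_cast; ring
  simp only [ff]
  rw [← h1, ← h2]
  push_cast
  ring

/-- for `p > 0` and `k ∈ ℤ`,
`(1/2π) ∫_{-π}^{π} |1+e^{iθ}|^{p-2} (1+e^{iθ}) e^{-ikθ} dθ = Γ(p)/(Γ(p/2+1-k)Γ(p/2+k))`,
with the convention `1/Γ = 0` at nonpositive integers. -/
theorem integral_one_add_exp_pow (p : ℝ) (hp : 0 < p) (k : ℤ) :
    (1 / (2 * Real.pi) : ℝ) • ∫ θ in (-Real.pi)..Real.pi,
        ((‖1 + Complex.exp ((θ : ℂ) * Complex.I)‖ ^ (p - 2) : ℝ) : ℂ)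
          * (1 + Complex.exp ((θ : ℂ) * Complex.I))
          * Complex.exp (-(k : ℂ) * (θ : ℂ) * Complex.I)
      = ((Real.Gamma p * (Real.Gamma (p / 2 + 1 - k))⁻¹ * (Real.Gamma (p / 2 + k))⁻¹ : ℝ) : ℂ) := by
  have hπ := Real.pi_pos
  have hae : ∀ᵐ θ ∂(volume : Measure ℝ), θ ∈ Set.uIoc (-Real.pi) Real.pi →
      ((‖1 + Complex.exp ((θ : ℂ) * Complex.I)‖ ^ (p - 2) : ℝ) : ℂ)
          * (1 + Complex.exp ((θ : ℂ) * Complex.I))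
          * Complex.exp (-(k : ℂ) * (θ : ℂ) * Complex.I)
        = ff p (1/2 - (k:ℝ)) θ := by
    have hsing : ∀ᵐ θ : ℝ ∂(volume : Measure ℝ), θ ≠ Real.pi := by
      refine ae_iff.mpr ?_
      simp only [ne_eq, not_not, Set.setOf_eq_eq_singleton]
      exact Real.volume_singleton
    filter_upwards [hsing] with θ hne hmem
    rw [Set.uIoc_of_le (by linarith)] at hmem
    exact integrand_eq p hp k ⟨hmem.1, lt_of_le_of_ne hmem.2 hne⟩
  rw [intervalIntegral.integral_congr_ae hae]
  have := key p hp k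
  rw [Jf] at this
  rw [this]
  unfold Fr
  norm_num
end
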